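/- Let (𝒜, ℱ) be a subshift of finite type on ℤ^d. Player B has a winning strategy in the Domino game Γ(𝒜, ℱ, ℤ^d) if and only if, for every n ∈ ℕ with n ≥ 1, player B has a winning strategy in the Domino game Γ(𝒜, ℱ, ⟦−n, n⟧^d) played on the finite box ⟦−n, n⟧^d. -/

import Mathlib

open Filter Topology

attribute [local instance] Classical.propDecidable

/-- The two players. -/
inductive Player | A | B
deriving DecidableEq

/-- A cell of the grid `ℤ^d`. -/
abbrev Cell (d : ℕ) := Fin d → ℤ

/-- A (possibly partial) colouring of the grid: `none` means uncoloured.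
Colours are natural numbers; the alphabet of size `m` is `{0, …, m-1}`. -/
abbrev Board (d : ℕ) := Cell d → Option ℕ

/-- A finite pattern, encoded as a list of tiles (cell, colour). -/
abbrev PatternCode (d : ℕ) := List (Cell d × ℕ)

/-- A move: `none` is a pass, `some (i, a)` colours cell `i` with colour `a`. -/
abbrev MoveD (d : ℕ) := Option (Cell d × ℕ)

/-- Code for an SFT: alphabet size together with the list of forbidden patterns. -/
abbrev SFTCode (d : ℕ) := ℕ × List (PatternCode d)

/-- A (positional) strategy: a move for every position. -/
abbrev Strategy (d : ℕ) := Board d → MoveD d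

def emptyBoard (d : ℕ) : Board d := fun _ => none

/-- The pattern `p` occurs in the board `x` translated by `t`. -/
def occursAt {d : ℕ} (p : PatternCode d) (x : Board d) (t : Cell d) : Prop :=
  ∀ q ∈ p, x (t + q.1) = some q.2

/-- A position is final when a translate of some forbidden pattern occurs. -/
def isFinal {d : ℕ} (F : List (PatternCode d)) (x : Board d) : Prop :=
  ∃ p ∈ F, ∃ t : Cell d, occursAt p x t

/-- Legality of a move in the game with alphabet `{0,…,m-1}` played on `E`:
a pass is always legal, and a colouring move must pick an uncoloured cell of `E`
and a colour of the alphabet. -/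
def legalMove {d : ℕ} (m : ℕ) (E : Set (Cell d)) (x : Board d) : MoveD d → Prop
  | none => True
  | some (i, a) => i ∈ E ∧ x i = none ∧ a < m

def applyMove {d : ℕ} (x : Board d) : MoveD d → Board d
  | none => x
  | some (i, a) => Function.update x i (some a)

/-- One step of the game: the move proposed by the strategy is played if legal
(an illegal move is treated as a pass). -/
noncomputable def step {d : ℕ} (m : ℕ) (E : Set (Cell d)) (st : Strategy d)
    (x : Board d) : Board d :=
  if legalMove m E x (st x) then applyMove x (st x) else x

/-- The play generated by strategies `stA`, `stB` with turn order `s`,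
starting from the empty board. -/
noncomputable def play {d : ℕ} (m : ℕ) (E : Set (Cell d)) (s : ℕ → Player)
    (stA stB : Strategy d) : ℕ → Board d
  | 0 => emptyBoard d
  | t + 1 => step m E (match s t with | .A => stA | .B => stB) (play m E s stA stB t)

/-- The alternating turn order: `A` plays first. -/
def alt : ℕ → Player := fun t => if t % 2 = 0 then .A else .B

/-- Player `A` has a winning strategy in the Domino game with turn order `s`:
a final position is eventually reached whatever `B` plays. -/
def AWins {d : ℕ} (m : ℕ) (F : List (PatternCode d)) (E : Set (Cell d))
    (s : ℕ → Player) : Prop :=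
  ∃ stA : Strategy d, ∀ stB : Strategy d, ∃ t : ℕ, isFinal F (play m E s stA stB t)

/-- Player `B` has a winning strategy in the Domino game with turn order `s`:
a final position is never reached whatever `A` plays. -/
def BWins {d : ℕ} (m : ℕ) (F : List (PatternCode d)) (E : Set (Cell d))
    (s : ℕ → Player) : Prop :=
  ∃ stB : Strategy d, ∀ stA : Strategy d, ∀ t : ℕ, ¬ isFinal F (play m E s stA stB t)

/-- The Domino game problem on `ℤ^d` (alternating turn order, `A` first). -/
def DGame (d : ℕ) : SFTCode d → Prop :=
  fun c => AWins c.1 c.2 Set.univ alt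

/-- The finite box `⟦-n, n⟧^d` of cells of `ℤ^d`. -/
def box (d n : ℕ) : Set (Cell d) := {i | ∀ k, |i k| ≤ (n : ℤ)}

namespace DominoAux

variable {d : ℕ}

/-! ### Basic order on boards -/

def BLe (x y : Board d) : Prop := ∀ i v, x i = some v → y i = some v

lemma ble_refl (x : Board d) : BLe x x := fun _ _ h => h

lemma ble_trans {x y z : Board d} (h1 : BLe x y) (h2 : BLe y z) : BLe x z :=
  fun i v hx => h2 i v (h1 i v hx)

lemma ble_antisymm {x y : Board d} (h1 : BLe x y) (h2 : BLe y x) : x = y := by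
  funext i
  cases hx : x i with
  | some v => rw [h1 i v hx]
  | none =>
    cases hy : y i with
    | some w => exact absurd (h2 i w hy) (by rw [hx]; simp)
    | none => rfl

lemma isFinal_mono {F : List (PatternCode d)} {x y : Board d} (h : BLe x y) :
    isFinal F x → isFinal F y := by
  rintro ⟨p, hp, t, hocc⟩
  exact ⟨p, hp, t, fun q hq => h _ _ (hocc q hq)⟩

lemma step_def (m : ℕ) (E : Set (Cell d)) (st : Strategy d) (x : Board d) :
    step m E st x = if legalMove m E x (st x) then applyMove x (st x) else x := rfl

lemma step_congr {m : ℕ} {E : Set (Cell d)} {st st' : Strategy d} {x : Board d}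
    (h : st x = st' x) : step m E st x = step m E st' x := by
  rw [step_def, step_def, h]

lemma applyMove_ble {m : ℕ} {E : Set (Cell d)} {x : Board d} {mv : MoveD d}
    (h : legalMove m E x mv) : BLe x (applyMove x mv) := by
  rcases mv with _ | ⟨i, a⟩
  · exact ble_refl x
  · intro i' v hv
    have hne : i' ≠ i := by rintro rfl; rw [h.2.1] at hv; exact nomatch hv
    show Function.update x i (some a) i' = some v
    rw [Function.update_of_ne hne]; exact hv

lemma step_ble (m : ℕ) (E : Set (Cell d)) (st : Strategy d) (x : Board d) :
    BLe x (step m E st x) := by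
  rw [step_def]
  split
  · exact applyMove_ble ‹_›
  · exact ble_refl x

/-! ### Plays from an arbitrary starting position -/

noncomputable def playFrom (m : ℕ) (E : Set (Cell d)) (y : Board d)
    (stA stB : Strategy d) : ℕ → Board d
  | 0 => y
  | t + 1 => step m E (match alt t with | .A => stA | .B => stB)
      (playFrom m E y stA stB t)

lemma playFrom_succ (m : ℕ) (E : Set (Cell d)) (y : Board d)
    (stA stB : Strategy d) (t : ℕ) :
    playFrom m E y stA stB (t + 1)
      = step m E (match alt t with | .A => stA | .B => stB)
          (playFrom m E y stA stB t) := rfl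

lemma play_eq_playFrom (m : ℕ) (E : Set (Cell d)) (stA stB : Strategy d) :
    ∀ t, play m E alt stA stB t = playFrom m E (emptyBoard d) stA stB t
  | 0 => rfl
  | t + 1 => by
    show step m E _ (play m E alt stA stB t) = step m E _ (playFrom m E (emptyBoard d) stA stB t)
    rw [play_eq_playFrom m E stA stB t]

lemma playFrom_ble (m : ℕ) (E : Set (Cell d)) (y : Board d) (stA stB : Strategy d) :
    ∀ t, BLe y (playFrom m E y stA stB t)
  | 0 => ble_refl y
  | t + 1 => ble_trans (playFrom_ble m E y stA stB t) (step_ble _ _ _ _)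

lemma alt_even (j : ℕ) : alt (2 * j) = Player.A := by
  simp [alt, Nat.mul_mod_right]

lemma alt_odd (j : ℕ) : alt (2 * j + 1) = Player.B := by
  have h : (2 * j + 1) % 2 = 1 := by omega
  simp [alt, h]

lemma alt_add_two (t : ℕ) : alt (t + 2) = alt t := by
  simp [alt, Nat.add_mod_right]

/-! ### Safety -/

def SafeVia (m : ℕ) (F : List (PatternCode d)) (E : Set (Cell d))
    (stB : Strategy d) (y : Board d) : Prop :=
  ∀ stA : Strategy d, ∀ t : ℕ, ¬ isFinal F (playFrom m E y stA stB t)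

def SafeFrom (m : ℕ) (F : List (PatternCode d)) (E : Set (Cell d)) (y : Board d) : Prop :=
  ∃ stB, SafeVia m F E stB y

lemma SafeVia.notFinal {m : ℕ} {F : List (PatternCode d)} {E : Set (Cell d)}
    {stB : Strategy d} {y : Board d} (h : SafeVia m F E stB y) : ¬ isFinal F y :=
  h (fun _ => none) 0

lemma safeVia_step {m : ℕ} {F : List (PatternCode d)} {E' : Set (Cell d)}
    {stB : Strategy d} {v : Board d} (h : SafeVia m F E' stB v) (mv : MoveD d) :
    ¬ isFinal F (step m E' (fun _ => mv) v) ∧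
      ¬ isFinal F (step m E' stB (step m E' (fun _ => mv) v)) ∧
      SafeVia m F E' stB (step m E' stB (step m E' (fun _ => mv) v)) := by
  have a0 : alt 0 = Player.A := by simp [alt]
  have a1 : alt (0 + 1) = Player.B := by simp [alt]
  have e1 : playFrom m E' v (fun _ => mv) stB (0 + 1) = step m E' (fun _ => mv) v := by
    rw [playFrom_succ, a0]
    rfl
  have e2 : playFrom m E' v (fun _ => mv) stB (0 + 1 + 1)
      = step m E' stB (step m E' (fun _ => mv) v) := by
    rw [playFrom_succ, a1, e1]
  refine ⟨?_, ?_, ?_⟩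
  · have h1 := h (fun _ => mv) (0 + 1); rwa [e1] at h1
  · have h2 := h (fun _ => mv) (0 + 1 + 1); rwa [e2] at h2
  · by_cases hvv : step m E' stB (step m E' (fun _ => mv) v) = v
    · rw [hvv]; exact h
    · intro stA'' t
      set v2 := step m E' stB (step m E' (fun _ => mv) v) with hv2def
      have hvle : BLe v v2 := ble_trans (step_ble _ _ _ _) (step_ble _ _ _ _)
      set stA : Strategy d := fun z => if z = v then mv else stA'' z with hstA
      have hAonv : stA v = (fun _ => mv) v := by simp [hstA]
      have hne : ∀ s, playFrom m E' v2 stA'' stB s ≠ v := by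
        intro s hw
        have hb := playFrom_ble m E' v2 stA'' stB s
        rw [hw] at hb
        exact hvv (ble_antisymm hb hvle)
      have hkey : ∀ s, playFrom m E' v stA stB (s + 2)
          = playFrom m E' v2 stA'' stB s := by
        intro s
        induction s with
        | zero =>
          show playFrom m E' v stA stB (0 + 1 + 1) = _
          rw [playFrom_succ, a1, playFrom_succ, a0]
          show step m E' stB (step m E' stA v) = v2
          rw [step_congr (st' := fun _ => mv) hAonv]
        | succ s ih =>
          show playFrom m E' v stA stB (s + 2 + 1) = playFrom m E' v2 stA'' stB (s + 1)
          rw [playFrom_succ m E' v stA stB (s + 2), playFrom_succ m E' v2 stA'' stB s,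
            ih, alt_add_two]
          cases halt : alt s with
          | A => exact step_congr (if_neg (hne s))
          | B => rfl
      have := h stA (t + 2)
      rwa [hkey t] at this

/-! ### Compatibility with sub-arenas and the simulation lemma -/

noncomputable def proj (E : Set (Cell d)) (x : Board d) : Board d := fun i => if i ∈ E then x i else none

def Compat (E : Set (Cell d)) (v r : Board d) : Prop :=
  (∀ i ∈ E, v i = r i) ∧ ∀ i ∉ E, r i = none

lemma Compat.ble {E : Set (Cell d)} {v r : Board d} (h : Compat E v r) : BLe r v := by
  intro i w hw
  by_cases hi : i ∈ E
  · rw [h.1 i hi]; exact hw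
  · rw [h.2 i hi] at hw; exact nomatch hw

lemma compat_proj (E : Set (Cell d)) (y : Board d) : Compat E y (proj E y) :=
  ⟨fun i hi => (if_pos hi).symm, fun i hi => if_neg hi⟩

lemma stepCompat {m : ℕ} {E E' : Set (Cell d)} (hE : E ⊆ E') {v r : Board d}
    (hc : Compat E v r) (b : MoveD d) :
    Compat E (if legalMove m E' v b then applyMove v b else v)
      (if legalMove m E r b then applyMove r b else r) := by
  rcases b with _ | ⟨j, c⟩
  · rw [if_pos (show legalMove m E' v none from trivial),
      if_pos (show legalMove m E r none from trivial)]
    exact hc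
  · by_cases h' : legalMove m E' v (some (j, c))
    · rw [if_pos h']
      by_cases hj : j ∈ E
      · have hrj : r j = none := by rw [← hc.1 j hj]; exact h'.2.1
        have hleg : legalMove m E r (some (j, c)) := ⟨hj, hrj, h'.2.2⟩
        rw [if_pos hleg]
        refine ⟨fun i hi => ?_, fun i hi => ?_⟩
        · show Function.update v j (some c) i = Function.update r j (some c) i
          by_cases hij : i = j
          · subst hij; simp
          · rw [Function.update_of_ne hij, Function.update_of_ne hij]
            exact hc.1 i hi
        · have hij : i ≠ j := fun e => hi (e ▸ hj)
          show Function.update r j (some c) i = none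
          rw [Function.update_of_ne hij]
          exact hc.2 i hi
      · have hleg : ¬ legalMove m E r (some (j, c)) := fun hl => hj hl.1
        rw [if_neg hleg]
        refine ⟨fun i hi => ?_, hc.2⟩
        have hij : i ≠ j := fun e => hj (e ▸ hi)
        show Function.update v j (some c) i = r i
        rw [Function.update_of_ne hij]
        exact hc.1 i hi
    · have hleg : ¬ legalMove m E r (some (j, c)) := by
        intro hl
        exact h' ⟨hE hl.1, by rw [hc.1 j hl.1]; exact hl.2.1, hl.2.2⟩
      rw [if_neg h', if_neg hleg]
      exact hc

def QB (m : ℕ) (F : List (PatternCode d)) (E' : Set (Cell d)) (stB : Strategy d)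
    (w : Board d) : Prop :=
  ¬ isFinal F w ∧ ¬ isFinal F (step m E' stB w) ∧ SafeVia m F E' stB (step m E' stB w)

noncomputable def eps (m : ℕ) (F : List (PatternCode d)) (E E' : Set (Cell d))
    (stB : Strategy d) (r : Board d) : Board d :=
  if h : ∃ w, Compat E w r ∧ QB m F E' stB w then h.choose else emptyBoard d

lemma eps_spec {m : ℕ} {F : List (PatternCode d)} {E E' : Set (Cell d)}
    {stB : Strategy d} {r : Board d} (h : ∃ w, Compat E w r ∧ QB m F E' stB w) :
    Compat E (eps m F E E' stB r) r ∧ QB m F E' stB (eps m F E E' stB r) := by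
  unfold eps
  rw [dif_pos h]
  exact h.choose_spec

lemma sim {m : ℕ} {F : List (PatternCode d)} {E E' : Set (Cell d)} (hE : E ⊆ E')
    {stB : Strategy d} {y : Board d} (h : SafeVia m F E' stB y) :
    SafeFrom m F E (proj E y) := by
  refine ⟨fun r => stB (eps m F E E' stB r), ?_⟩
  intro stA t
  set stB' : Strategy d := fun r => stB (eps m F E E' stB r) with hstB'
  have stepfact : ∀ j,
      (∃ v, Compat E v (playFrom m E (proj E y) stA stB' (2 * j)) ∧ SafeVia m F E' stB v) →
      ¬ isFinal F (playFrom m E (proj E y) stA stB' (2 * j)) ∧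
      ¬ isFinal F (playFrom m E (proj E y) stA stB' (2 * j + 1)) ∧
      (∃ v, Compat E v (playFrom m E (proj E y) stA stB' (2 * j + 2)) ∧
        SafeVia m F E' stB v) := by
    rintro j ⟨v, hc, hv⟩
    set r0 := playFrom m E (proj E y) stA stB' (2 * j) with hr0
    have hx1 : playFrom m E (proj E y) stA stB' (2 * j + 1) = step m E stA r0 := by
      rw [playFrom_succ, alt_even]
    set r1 := playFrom m E (proj E y) stA stB' (2 * j + 1) with hr1
    have hcompat1 : Compat E (if legalMove m E' v (stA r0) then applyMove v (stA r0) else v)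
        r1 := by
      rw [hx1, step_def]
      exact stepCompat hE hc (stA r0)
    obtain ⟨hnf1, hnf2, hsafe2⟩ := safeVia_step hv (stA r0)
    have hv1eq : step m E' (fun _ => stA r0) v
        = if legalMove m E' v (stA r0) then applyMove v (stA r0) else v := rfl
    rw [hv1eq] at hnf1 hnf2 hsafe2
    have hEx : ∃ w, Compat E w r1 ∧ QB m F E' stB w :=
      ⟨_, hcompat1, hnf1, hnf2, hsafe2⟩
    obtain ⟨hcw, hqw⟩ := eps_spec hEx
    set w := eps m F E E' stB r1 with hw
    have hx2 : playFrom m E (proj E y) stA stB' (2 * j + 2)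
        = if legalMove m E r1 (stB w) then applyMove r1 (stB w) else r1 := by
      show playFrom m E (proj E y) stA stB' (2 * j + 1 + 1) = _
      rw [playFrom_succ, alt_odd]
      rfl
    have hcompat2 : Compat E (if legalMove m E' w (stB w) then applyMove w (stB w) else w)
        (playFrom m E (proj E y) stA stB' (2 * j + 2)) := by
      rw [hx2]
      exact stepCompat hE hcw (stB w)
    refine ⟨fun hf => hv.notFinal (isFinal_mono hc.ble hf),
            fun hf => hqw.1 (isFinal_mono hcw.ble hf),
            ⟨_, hcompat2, ?_⟩⟩
    exact hqw.2.2
  have inv : ∀ j, ∃ v, Compat E v (playFrom m E (proj E y) stA stB' (2 * j)) ∧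
      SafeVia m F E' stB v := by
    intro j
    induction j with
    | zero => exact ⟨y, compat_proj E y, h⟩
    | succ j ih =>
      have h2 := (stepfact j ih).2.2
      rwa [show 2 * j + 2 = 2 * (j + 1) by ring] at h2
  rcases Nat.even_or_odd t with ⟨j, hj⟩ | ⟨j, hj⟩
  · rw [show t = 2 * j by omega]
    exact (stepfact j (inv j)).1
  · rw [show t = 2 * j + 1 by omega]
    exact (stepfact j (inv j)).2.1

/-! ### Support, boxes, and the compactness direction -/

lemma infinite_exists_gt {s : Set ℕ} (hs : s.Infinite) (K : ℕ) : ∃ N ∈ s, K < N := by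
  by_contra hcon
  push_neg at hcon
  exact hs (Set.Finite.subset (Set.finite_Iic K) fun n hn => Set.mem_Iic.mpr (hcon n hn))

def Supported (k : ℕ) (x : Board d) : Prop :=
  ∀ i : Cell d, x i ≠ none → ∀ l, |i l| ≤ (k : ℤ)

lemma Supported.mono {k k' : ℕ} {x : Board d} (hx : Supported k x) (h : k ≤ k') :
    Supported k' x :=
  fun i hi l => (hx i hi l).trans (by exact_mod_cast h)

lemma box_mono {k n : ℕ} (h : k ≤ n) : box d k ⊆ box d n :=
  fun i hi l => (hi l).trans (by exact_mod_cast h)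

def cellBound (i : Cell d) : ℕ := Finset.univ.sup fun l => (i l).natAbs

lemma mem_box_of_cellBound {i : Cell d} {n : ℕ} (h : cellBound i ≤ n) : i ∈ box d n := by
  intro l
  have h1 : (i l).natAbs ≤ n :=
    le_trans (Finset.le_sup (f := fun l => (i l).natAbs) (Finset.mem_univ l)) h
  calc |i l| = ((i l).natAbs : ℤ) := Int.abs_eq_natAbs _
    _ ≤ n := by exact_mod_cast h1

lemma supported_update {k : ℕ} {x : Board d} (h : Supported k x) (i : Cell d) (c : ℕ) :
    Supported (max k (cellBound i)) (Function.update x i (some c)) := by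
  intro i' hi' l
  by_cases hii : i' = i
  · subst hii
    have h1 : (i' l).natAbs ≤ max k (cellBound i') :=
      le_trans (Finset.le_sup (f := fun l => (i' l).natAbs) (Finset.mem_univ l))
        (le_max_right k (cellBound i'))
    calc |i' l| = ((i' l).natAbs : ℤ) := Int.abs_eq_natAbs _
      _ ≤ max k (cellBound i') := by exact_mod_cast h1
  · rw [Function.update_of_ne hii] at hi'
    exact (h i' hi' l).trans (by exact_mod_cast le_max_left k (cellBound i))

lemma proj_eq_self {K : ℕ} {x : Board d} (h : Supported K x) : proj (box d K) x = x := by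
  funext i
  by_cases hi : i ∈ box d K
  · exact if_pos hi
  · show (if i ∈ box d K then x i else none) = x i
    rw [if_neg hi]
    cases hx : x i with
    | none => rfl
    | some v => exact absurd (fun l => h i (by rw [hx]; simp) l) hi

lemma box_finite (K : ℕ) : (box d K).Finite := by
  have hbox : box d K = Set.pi Set.univ (fun _ : Fin d => Set.Icc (-(K : ℤ)) (K : ℤ)) := by
    ext i
    simp only [box, Set.mem_setOf_eq, Set.mem_univ_pi, Set.mem_Icc, abs_le]
  rw [hbox]
  exact Set.Finite.pi fun _ => Set.finite_Icc _ _

lemma safeFrom_mono {m : ℕ} {F : List (PatternCode d)} {E E' : Set (Cell d)}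
    (hE : E ⊆ E') {y : Board d} (h : SafeFrom m F E' y) : SafeFrom m F E (proj E y) := by
  obtain ⟨stB, hstB⟩ := h
  exact sim hE hstB

def InW (m : ℕ) (F : List (PatternCode d)) (x : Board d) : Prop :=
  ∃ k, Supported k x ∧ ∀ n, k ≤ n → SafeFrom m F (box d n) x

lemma stepspec {m : ℕ} {F : List (PatternCode d)} {n : ℕ} {x x' : Board d}
    (h : SafeFrom m F (box d n) x) (mv : MoveD d)
    (heq : step m (box d n) (fun _ => mv) x = x') :
    ¬ isFinal F x' ∧
      ∃ b, legalMove m (box d n) x' b ∧ SafeFrom m F (box d n) (applyMove x' b) := by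
  obtain ⟨stB, hstB⟩ := h
  obtain ⟨h1, h2, h3⟩ := safeVia_step hstB mv
  rw [heq] at h1 h2 h3
  by_cases hleg : legalMove m (box d n) x' (stB x')
  · refine ⟨h1, stB x', hleg, ?_⟩
    have he : applyMove x' (stB x') = step m (box d n) stB x' := by
      rw [step_def, if_pos hleg]
    rw [he]
    exact ⟨stB, h3⟩
  · refine ⟨h1, none, trivial, ?_⟩
    have he : step m (box d n) stB x' = x' := by rw [step_def, if_neg hleg]
    rw [he] at h3
    exact ⟨stB, h3⟩

lemma pigeon {m : ℕ} {F : List (PatternCode d)} {x' : Board d} {k2 : ℕ}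
    (hsup : Supported k2 x')
    (hspec : ∀ n, k2 ≤ n →
      ∃ b, legalMove m (box d n) x' b ∧ SafeFrom m F (box d n) (applyMove x' b)) :
    ∃ b, legalMove m Set.univ x' b ∧ InW m F (applyMove x' b) := by
  choose! g hg1 hg2 using hspec
  by_cases hcase : ∃ j c, {n | k2 ≤ n ∧ g n = some (j, c)}.Infinite
  · obtain ⟨j, c, hinf⟩ := hcase
    obtain ⟨N0, hN0⟩ := hinf.nonempty
    have hlegN0 := hg1 N0 hN0.1
    rw [hN0.2] at hlegN0
    refine ⟨some (j, c), ⟨Set.mem_univ j, hlegN0.2.1, hlegN0.2.2⟩, max k2 (cellBound j), ?_, ?_⟩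
    · exact supported_update hsup j c
    · intro K hK
      obtain ⟨N, hNmem, hKN⟩ := infinite_exists_gt hinf K
      have h1 := hg2 N hNmem.1
      rw [hNmem.2] at h1
      have h2 := safeFrom_mono (box_mono hKN.le) h1
      have h3 : proj (box d K) (Function.update x' j (some c)) = Function.update x' j (some c) :=
        proj_eq_self (Supported.mono (supported_update hsup j c) hK)
      rw [show applyMove x' (some (j, c)) = Function.update x' j (some c) from rfl, h3] at h2
      exact h2
  · have hfin : ∀ j c, {n | k2 ≤ n ∧ g n = some (j, c)}.Finite := by
      intro j c
      by_contra hcon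
      exact hcase ⟨j, c, hcon⟩
    refine ⟨none, trivial, k2, hsup, ?_⟩
    intro K hK
    have hBadfin : {n | ∃ j c, g n = some (j, c) ∧ j ∈ box d K ∧ k2 ≤ n}.Finite := by
      have hsub : {n | ∃ j c, g n = some (j, c) ∧ j ∈ box d K ∧ k2 ≤ n}
          ⊆ ⋃ j ∈ box d K, ⋃ c ∈ Set.Iio m, {n | k2 ≤ n ∧ g n = some (j, c)} := by
        rintro n ⟨j, c, h1, h2, h3⟩
        have hcm : c < m := by
          have hl := hg1 n h3
          rw [h1] at hl
          exact hl.2.2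
        simp only [Set.mem_iUnion]
        exact ⟨j, h2, c, hcm, h3, h1⟩
      exact Set.Finite.subset
        (Set.Finite.biUnion (box_finite K) fun j _ =>
          Set.Finite.biUnion (Set.finite_Iio m) fun c _ => hfin j c) hsub
    obtain ⟨N, hN⟩ :=
      ((hBadfin.union (Set.finite_Iio (max k2 K))).infinite_compl).nonempty
    simp only [Set.mem_compl_iff, Set.mem_union, Set.mem_Iio, not_or, not_lt,
      Set.mem_setOf_eq] at hN
    obtain ⟨hNBad, hNge⟩ := hN
    have hk2N : k2 ≤ N := le_trans (le_max_left _ _) hNge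
    have hKN : K ≤ N := le_trans (le_max_right _ _) hNge
    have h2 := safeFrom_mono (box_mono hKN) (hg2 N hk2N)
    have hproj : proj (box d K) (applyMove x' (g N)) = x' := by
      rcases hgn : g N with _ | ⟨j, c⟩
      · exact proj_eq_self (hsup.mono hK)
      · have hj : j ∉ box d K := fun hj => hNBad ⟨j, c, hgn, hj, hk2N⟩
        funext i
        by_cases hi : i ∈ box d K
        · have hij : i ≠ j := fun e => hj (e ▸ hi)
          show (if i ∈ box d K then Function.update x' j (some c) i else none) = x' i
          rw [if_pos hi, Function.update_of_ne hij]
        · show (if i ∈ box d K then Function.update x' j (some c) i else none) = x' i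
          rw [if_neg hi]
          cases hx : x' i with
          | none => rfl
          | some v => exact absurd (fun l => hsup.mono hK i (by rw [hx]; simp) l) hi
    rwa [hproj] at h2

lemma key {m : ℕ} {F : List (PatternCode d)} {x : Board d} {k : ℕ}
    (hsup : Supported k x) (hsafe : ∀ n, k ≤ n → SafeFrom m F (box d n) x)
    (stA : Strategy d) :
    ¬ isFinal F (step m Set.univ stA x) ∧
      ∃ b, legalMove m Set.univ (step m Set.univ stA x) b ∧
        InW m F (applyMove (step m Set.univ stA x) b) := by
  by_cases hleg : legalMove m Set.univ x (stA x)
  · rcases hmv : stA x with _ | ⟨i, c⟩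
    · have hx' : step m Set.univ stA x = x := by
        rw [step_def, hmv, if_pos (show legalMove m Set.univ x none from trivial)]
        rfl
      rw [hx']
      have heq : ∀ n, k ≤ n → step m (box d n) (fun _ => (none : MoveD d)) x = x := by
        intro n _
        rw [step_def, if_pos (show legalMove m (box d n) x none from trivial)]
        rfl
      refine ⟨(stepspec (hsafe k le_rfl) none (heq k le_rfl)).1, pigeon hsup ?_⟩
      intro n hn
      exact (stepspec (hsafe n hn) none (heq n hn)).2
    · rw [hmv] at hleg
      have hx' : step m Set.univ stA x = Function.update x i (some c) := by
        rw [step_def, hmv, if_pos hleg]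
        rfl
      have heq : ∀ n, max k (cellBound i) ≤ n →
          step m (box d n) (fun _ => (some (i, c) : MoveD d)) x
            = Function.update x i (some c) := by
        intro n hn
        have hmem : i ∈ box d n := mem_box_of_cellBound (le_trans (le_max_right _ _) hn)
        rw [step_def,
          if_pos (show legalMove m (box d n) x (some (i, c)) from ⟨hmem, hleg.2.1, hleg.2.2⟩)]
        rfl
      rw [hx']
      refine ⟨(stepspec (hsafe (max k (cellBound i)) (le_max_left _ _)) _ (heq _ le_rfl)).1,
        pigeon (supported_update hsup i c) ?_⟩
      intro n hn
      exact (stepspec (hsafe n (le_trans (le_max_left _ _) hn)) _ (heq n hn)).2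
  · have hx' : step m Set.univ stA x = x := by rw [step_def, if_neg hleg]
    rw [hx']
    have heq : ∀ n, k ≤ n → step m (box d n) (fun _ => (none : MoveD d)) x = x := by
      intro n _
      rw [step_def, if_pos (show legalMove m (box d n) x none from trivial)]
      rfl
    refine ⟨(stepspec (hsafe k le_rfl) none (heq k le_rfl)).1, pigeon hsup ?_⟩
    intro n hn
    exact (stepspec (hsafe n hn) none (heq n hn)).2

noncomputable def bStrat (m : ℕ) (F : List (PatternCode d)) : Strategy d := fun z =>
  if hz : ∃ b, legalMove m Set.univ z b ∧ InW m F (applyMove z b) then hz.choose else none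

lemma bStrat_spec {m : ℕ} {F : List (PatternCode d)} {z : Board d}
    (hz : ∃ b, legalMove m Set.univ z b ∧ InW m F (applyMove z b)) :
    legalMove m Set.univ z (bStrat m F z) ∧ InW m F (applyMove z (bStrat m F z)) := by
  unfold bStrat
  rw [dif_pos hz]
  exact hz.choose_spec

lemma play_succ (m : ℕ) (E : Set (Cell d)) (s : ℕ → Player) (stA stB : Strategy d) (t : ℕ) :
    play m E s stA stB (t + 1)
      = step m E (match s t with | .A => stA | .B => stB) (play m E s stA stB t) := rfl

end DominoAux

/-- `B` wins the Domino game on `ℤ^d` if and only if `B` wins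
the Domino game on every finite box `⟦-n, n⟧^d`, `n ≥ 1`. -/
theorem bWins_iff_bWins_boxes (d m : ℕ) (F : List (PatternCode d)) :
    BWins m F Set.univ alt ↔ ∀ n : ℕ, 1 ≤ n → BWins m F (box d n) alt := by
  open DominoAux in
  constructor
  · rintro ⟨stB, hB⟩ n _
    have hs : SafeVia m F Set.univ stB (emptyBoard d) := by
      intro stA t
      rw [← play_eq_playFrom]
      exact hB stA t
    have hsim := sim (Set.subset_univ (box d n)) hs
    rw [show proj (box d n) (emptyBoard d) = emptyBoard d from
      funext fun i => by unfold proj emptyBoard; simp] at hsim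
    obtain ⟨stB', hB'⟩ := hsim
    exact ⟨stB', fun stA t => by rw [play_eq_playFrom]; exact hB' stA t⟩
  · intro h
    refine ⟨bStrat m F, ?_⟩
    intro stA t
    have hW0 : InW m F (emptyBoard d) := by
      refine ⟨1, fun i hi _ => absurd rfl hi, fun n hn => ?_⟩
      obtain ⟨stB', hB'⟩ := h n hn
      exact ⟨stB', fun sA s => by rw [← play_eq_playFrom]; exact hB' sA s⟩
    have hx1 : ∀ j, play m Set.univ alt stA (bStrat m F) (2 * j + 1)
        = step m Set.univ stA (play m Set.univ alt stA (bStrat m F) (2 * j)) := by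
      intro j
      rw [play_succ, alt_even]
    have inv : ∀ j, InW m F (play m Set.univ alt stA (bStrat m F) (2 * j)) := by
      intro j
      induction j with
      | zero => exact hW0
      | succ j ih =>
        obtain ⟨k, hsup, hsafe⟩ := ih
        have hkey := (key hsup hsafe stA).2
        rw [← hx1 j] at hkey
        obtain ⟨hlegb, hWb⟩ := bStrat_spec hkey
        have hx2 : play m Set.univ alt stA (bStrat m F) (2 * (j + 1))
            = applyMove (play m Set.univ alt stA (bStrat m F) (2 * j + 1))
                (bStrat m F (play m Set.univ alt stA (bStrat m F) (2 * j + 1))) := by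
          rw [show 2 * (j + 1) = (2 * j + 1) + 1 by ring, play_succ, alt_odd, step_def,
            if_pos hlegb]
        rw [hx2]
        exact hWb
    have evennf : ∀ j, ¬ isFinal F (play m Set.univ alt stA (bStrat m F) (2 * j)) := by
      intro j
      obtain ⟨k, hsup, hsafe⟩ := inv j
      obtain ⟨stB', hB'⟩ := hsafe k le_rfl
      exact fun hf => hB' (fun _ => none) 0 hf
    have oddnf : ∀ j, ¬ isFinal F (play m Set.univ alt stA (bStrat m F) (2 * j + 1)) := by
      intro j
      obtain ⟨k, hsup, hsafe⟩ := inv j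
      have hkey := (key hsup hsafe stA).1
      rwa [← hx1 j] at hkey
    rcases Nat.even_or_odd t with ⟨j, hj⟩ | ⟨j, hj⟩
    · rw [show t = 2 * j by omega]
      exact evennf j
    · rw [show t = 2 * j + 1 by omega]
      exact oddnf j
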